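/- Let S be a nonempty semigroup such that S \ E(S) is finite, and let T be an S-valued sequence of length |S \ E(S)|. Then Π(T) ∩ E(S) = ∅ if and only if there exist distinct elements x_1, ..., x_k of S such that supp(T) = {x_1, ..., x_k}; each ⟨x_i⟩ is finite with I(x_i) ≡ 1 (mod P(x_i)) and v_{x_i}(T) = I(x_i) + P(x_i) − 2; x_i * x_j = x_j * x_i = x_j for all 1 ≤ i < j ≤ k; the sets of non-idempotent elements of the ⟨x_i⟩ are pairwise disjoint; and every element of S outside ⋃_{i=1}^k ⟨x_i⟩ is an idempotent. -/

import Mathlib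

/-- Product, in order, of the nonempty list `a :: l` in a semigroup. -/
def sprod {S : Type*} [Mul S] (a : S) (l : List S) : S := l.foldl (· * ·) a

/-- `pow1 x n = x^(n+1)`: the `(n+1)`-st power of `x` in a semigroup. -/
def pow1 {S : Type*} [Mul S] (x : S) : ℕ → S := fun n => Nat.rec x (fun _ y => y * x) n

/-- `Π(T)`: the set of products, in order, of nonempty lists which are
permutations of order-preserving sublists of `T`. -/
def PiSet {S : Type*} [Mul S] (T : List S) : Set S :=
  {s | ∃ u : List S, u.Sublist T ∧ ∃ a l, (a :: l).Perm u ∧ sprod a l = s}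

/-- `A(L)`: the set of products, in order, of nonempty order-preserving sublists of `L`. -/
def ASet {S : Type*} [Mul S] (L : List S) : Set S :=
  {s | ∃ a l, (a :: l).Sublist L ∧ sprod a l = s}

/-- `HasIndexPeriod x r p` says that `r` is the index of `x` (the least `r > 0` such
that `x^r = x^t` for some positive `t ≠ r`) and `p` is the period of `x` (the least
`p > 0` with `x^(r+p) = x^r`). Powers are expressed via `pow1 x (n-1) = x^n`. -/
def HasIndexPeriod {S : Type*} [Mul S] (x : S) (r p : ℕ) : Prop :=
  (0 < r ∧ (∃ t, 0 < t ∧ t ≠ r ∧ pow1 x (t - 1) = pow1 x (r - 1)) ∧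
    ∀ r', 0 < r' → (∃ t, 0 < t ∧ t ≠ r' ∧ pow1 x (t - 1) = pow1 x (r' - 1)) → r ≤ r') ∧
  (0 < p ∧ pow1 x (r + p - 1) = pow1 x (r - 1) ∧
    ∀ p', 0 < p' → pow1 x (r + p' - 1) = pow1 x (r - 1) → p ≤ p')

section Basics
variable {S : Type*} [Semigroup S]

theorem pow1_succ (x : S) (n : ℕ) : pow1 x (n+1) = pow1 x n * x := rfl

theorem pow1_add (x : S) (m n : ℕ) : pow1 x (m + n + 1) = pow1 x m * pow1 x n := by
  induction n with
  | zero => rfl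
  | succ n ih =>
      show pow1 x ((m + n + 1) + 1) = pow1 x m * (pow1 x n * x)
      rw [pow1_succ, ih, mul_assoc]

theorem pow1_succ' (x : S) (n : ℕ) : pow1 x (n+1) = x * pow1 x n := by
  have h := pow1_add x 0 n
  rw [Nat.zero_add] at h
  exact h

theorem sprod_cons (a b : S) (l : List S) : sprod a (b :: l) = a * sprod b l := by
  show List.foldl (· * ·) (a * b) l = a * List.foldl (· * ·) b l
  induction l generalizing b with
  | nil => rfl
  | cons c l ih =>
      show List.foldl (· * ·) ((a*b)*c) l = a * List.foldl (· * ·) (b*c) l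
      rw [mul_assoc]
      exact ih (b*c)

theorem sprod_append (a : S) (l : List S) (t : S) :
    sprod a (l ++ [t]) = sprod a l * t := by
  simp [sprod, List.foldl_append]

theorem sprod_replicate (x : S) (m : ℕ) : sprod x (List.replicate m x) = pow1 x m := by
  induction m with
  | zero => rfl
  | succ m ih =>
      have : List.replicate (m+1) x = List.replicate m x ++ [x] := by
        rw [← List.replicate_succ' ]
      rw [this, sprod_append, ih, pow1_succ]

end Basics

section HIP
variable {S : Type*} [Semigroup S]

theorem pow1_shift {x : S} {A D : ℕ} (h : pow1 x (A + D) = pow1 x A) :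
    ∀ c, A ≤ c → pow1 x (c + D) = pow1 x c := by
  intro c hc
  obtain ⟨e, rfl⟩ := Nat.exists_eq_add_of_le hc
  cases e with
  | zero => simpa using h
  | succ e =>
      have h1 : A + (e+1) + D = (A + D) + e + 1 := by omega
      have h2 : A + (e + 1) = A + e + 1 := rfl
      rw [h1, pow1_add, h, ← pow1_add, h2]

theorem pow1_shift_mul {x : S} {A D : ℕ} (h : pow1 x (A + D) = pow1 x A) :
    ∀ (j c : ℕ), A ≤ c → pow1 x (c + j * D) = pow1 x c := by
  intro j
  induction j with
  | zero => intro c _; simp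
  | succ j ih =>
      intro c hc
      have h1 : c + (j+1) * D = (c + j * D) + D := by ring
      rw [h1, pow1_shift h _ (le_trans hc (Nat.le_add_right _ _)), ih c hc]

variable {x : S} {r p : ℕ}

theorem hip_per (h : HasIndexPeriod x r p) : pow1 x ((r - 1) + p) = pow1 x (r - 1) := by
  have h1 : r + p - 1 = (r - 1) + p := by have := h.1.1; omega
  have := h.2.2.1; rwa [h1] at this

theorem hip_cycle (h : HasIndexPeriod x r p) (j c : ℕ) (hc : r - 1 ≤ c) : pow1 x (c + j * p) = pow1 x c :=
  pow1_shift_mul (hip_per h) j c hc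

theorem hip_le (h : HasIndexPeriod x r p) {a b : ℕ} (hab : a < b) (heq : pow1 x a = pow1 x b) :
    r - 1 ≤ a ∧ p ∣ (b - a) := by
  have hr := h.1.1
  have hp := h.2.1
  constructor
  · have := h.1.2.2 (a+1) (Nat.succ_pos a) ⟨b+1, Nat.succ_pos b, by omega, by
      simpa using heq.symm⟩
    omega
  · rcases Nat.lt_or_ge (b - a) p |>.symm.symm with _
    by_cases h0 : (b - a) % p = 0
    · exact Nat.dvd_of_mod_eq_zero h0
    · exfalso
      obtain ⟨q, hq⟩ : ∃ q, b - a = q * p + (b - a) % p :=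
        ⟨(b - a) / p, by rw [Nat.mul_comm]; exact (Nat.div_add_mod _ _).symm⟩
      have hsp : (b - a) % p < p := Nat.mod_lt _ hp
      have hshiftd : ∀ c, a ≤ c → pow1 x (c + (b - a)) = pow1 x c := by
        have he : pow1 x (a + (b - a)) = pow1 x a := by
          have hba : a + (b - a) = b := by omega
          rw [hba]; exact heq.symm
        exact pow1_shift he
      have e1 : pow1 x (r - 1) = pow1 x ((r - 1) + a * p) :=
        (hip_cycle h a (r-1) le_rfl).symm
      have e2 : pow1 x ((r - 1) + a * p) = pow1 x ((r - 1) + a * p + (b - a)) := by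
        refine (hshiftd _ ?_).symm
        calc a = a * 1 := (Nat.mul_one a).symm
        _ ≤ a * p := Nat.mul_le_mul_left a hp
        _ ≤ (r-1) + a * p := Nat.le_add_left _ _
      have e3 : (r - 1) + a * p + (b - a) = ((r - 1) + (b - a) % p) + (a + q) * p := by
        conv_lhs => rw [hq]
        ring
      have e4 : pow1 x (((r - 1) + (b - a) % p) + (a + q) * p)
          = pow1 x ((r - 1) + (b - a) % p) :=
        hip_cycle h _ _ (Nat.le_add_right _ _)
      have efin : pow1 x (r + (b - a) % p - 1) = pow1 x (r - 1) := by
        have hrs : r + (b - a) % p - 1 = (r - 1) + (b - a) % p := by omega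
        rw [hrs, ← e4, ← e3, ← e2, ← e1]
      have := h.2.2.2 _ (Nat.pos_of_ne_zero h0) efin
      omega

theorem hip_idem_iff (h : HasIndexPeriod x r p) (m : ℕ) :
    pow1 x m * pow1 x m = pow1 x m ↔ (r - 1 ≤ m ∧ p ∣ (m + 1)) := by
  have hsq : pow1 x m * pow1 x m = pow1 x (m + m + 1) := (pow1_add x m m).symm
  rw [hsq]
  constructor
  · intro he
    have := hip_le h (a := m) (b := m + m + 1) (by omega) he.symm
    have h2 : m + m + 1 - m = m + 1 := by omega
    rw [h2] at this
    exact this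
  · rintro ⟨h1, j, hj⟩
    have h2 : m + m + 1 = m + (m + 1) := by omega
    rw [h2, hj, Nat.mul_comm, hip_cycle h j m h1]

theorem hip_reduce (h : HasIndexPeriod x r p) (m : ℕ) : ∃ m', m' ≤ r + p - 2 ∧ pow1 x m = pow1 x m' := by
  have hr := h.1.1; have hp := h.2.1
  induction m using Nat.strong_induction_on with
  | _ m ih =>
    by_cases hm : m ≤ r + p - 2
    · exact ⟨m, hm, rfl⟩
    · have h1 : r - 1 ≤ m - p := by omega
      have h2 : (m - p) + 1 * p = m := by omega
      obtain ⟨m', hm', he⟩ := ih (m - p) (by omega)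
      exact ⟨m', hm', by rw [← h2, hip_cycle h 1 _ h1, he]⟩

end HIP

section Exist
variable {S : Type*} [Semigroup S]

theorem pow1_not_inj {x : S} (hni : ¬ Function.Injective (pow1 x)) :
    ∃ a b, a < b ∧ pow1 x a = pow1 x b := by
  obtain ⟨a, b, heq, hne⟩ := Function.not_injective_iff.1 hni
  rcases Nat.lt_or_ge a b with hlt | hge
  · exact ⟨a, b, hlt, heq⟩
  · exact ⟨b, a, by omega, heq.symm⟩

theorem exists_idem_pow (x : S) (hf : (Set.range (pow1 x)).Finite) :
    ∃ m, pow1 x m * pow1 x m = pow1 x m := by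
  have hni : ¬ Function.Injective (pow1 x) := by
    intro hinj
    exact (Set.infinite_range_of_injective hinj) hf
  obtain ⟨a, b, hab, heq⟩ := pow1_not_inj hni
  have hshift := pow1_shift_mul (D := b - a) (A := a)
    (by rw [show a + (b - a) = b by omega]; exact heq.symm)
  refine ⟨(b - a) * (a + 1) - 1, ?_⟩
  have hd : 0 < b - a := by omega
  have hal : a + 1 ≤ (b - a) * (a + 1) := Nat.le_mul_of_pos_left _ hd
  have hm : a ≤ (b - a) * (a + 1) - 1 := by omega
  set m := (b - a) * (a + 1) - 1 with hmdef
  have h1 : m + m + 1 = m + (a + 1) * (b - a) := by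
    rw [Nat.mul_comm (a+1) (b-a)]; omega
  rw [← pow1_add, h1, hshift (a+1) m hm]

theorem pow1_range_finite (hfin : {x : S | x * x ≠ x}.Finite) (x : S) :
    (Set.range (pow1 x)).Finite := by
  by_contra hinf
  have hinj : Function.Injective (pow1 x) := by
    intro a b heq
    by_contra hne
    have ⟨a', b', hab, heq'⟩ : ∃ a b, a < b ∧ pow1 x a = pow1 x b := by
      rcases Nat.lt_or_ge a b with hlt | hge
      · exact ⟨a, b, hlt, heq⟩
      · exact ⟨b, a, by omega, heq.symm⟩
    apply hinf
    have hshift := pow1_shift (D := b' - a') (A := a')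
      (by rw [show a' + (b' - a') = b' by omega]; exact heq'.symm)
    have hred : ∀ m, ∃ m' ≤ b', pow1 x m = pow1 x m' := by
      intro m
      induction m using Nat.strong_induction_on with
      | _ m ih =>
        by_cases hm : m ≤ b'
        · exact ⟨m, hm, rfl⟩
        · obtain ⟨m', hm', he⟩ := ih (m - (b' - a')) (by omega)
          refine ⟨m', hm', ?_⟩
          rw [← he, ← hshift (m - (b' - a')) (by omega),
            show m - (b' - a') + (b' - a') = m by omega]
    have : Set.range (pow1 x) ⊆ (pow1 x) '' (Set.Iic b') := by
      rintro _ ⟨m, rfl⟩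
      obtain ⟨m', hm', he⟩ := hred m
      exact ⟨m', hm', he.symm⟩
    exact ((Set.finite_Iic b').image _).subset this
  have hsub : Set.range (pow1 x) ⊆ {x : S | x * x ≠ x} := by
    rintro _ ⟨m, rfl⟩
    intro hidem
    have : pow1 x (m + m + 1) = pow1 x m := by rw [pow1_add]; exact hidem
    have := hinj this
    omega
  exact hinf (hfin.subset hsub)

theorem exists_hip (x : S) (hf : (Set.range (pow1 x)).Finite) :
    ∃ r p, HasIndexPeriod x r p := by
  classical
  have hni : ¬ Function.Injective (pow1 x) := by
    intro hinj
    exact (Set.infinite_range_of_injective hinj) hf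
  obtain ⟨a, b, hab, heq⟩ := pow1_not_inj hni
  set Q : ℕ → Prop := fun r' =>
    0 < r' ∧ ∃ t, 0 < t ∧ t ≠ r' ∧ pow1 x (t - 1) = pow1 x (r' - 1) with hQ
  have hQa : Q (a + 1) := ⟨Nat.succ_pos a, b + 1, Nat.succ_pos b, by omega, by
    simpa using heq.symm⟩
  set r := Nat.find ⟨a + 1, hQa⟩ with hrdef
  obtain ⟨hr0, t, ht0, htr, hteq⟩ := Nat.find_spec (⟨a + 1, hQa⟩ : ∃ n, Q n)
  have hrmin : ∀ r', Q r' → r ≤ r' := fun r' h => Nat.find_min' _ h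
  have htgt : r < t := by
    rcases Nat.lt_or_ge r t with h | h
    · exact h
    · exfalso
      have : Q t := ⟨ht0, r, hr0, htr.symm, hteq.symm⟩
      have := hrmin t this
      omega
  set Q2 : ℕ → Prop := fun p' => 0 < p' ∧ pow1 x (r + p' - 1) = pow1 x (r - 1) with hQ2
  have hQ2w : Q2 (t - r) := ⟨by omega, by rw [show r + (t - r) - 1 = t - 1 by omega]; exact hteq⟩
  set p := Nat.find ⟨t - r, hQ2w⟩ with hpdef
  obtain ⟨hp0, hpeq⟩ := Nat.find_spec (⟨t - r, hQ2w⟩ : ∃ n, Q2 n)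
  refine ⟨r, p, ⟨hr0, ⟨t, ht0, htr, hteq⟩, fun r' h1 h2 => hrmin r' ⟨h1, h2⟩⟩,
    hp0, hpeq, fun p' h1 h2 => Nat.find_min' _ ⟨h1, h2⟩⟩

end Exist

set_option linter.unusedSectionVars false
section PiSetLemmas
variable {S : Type*} [Semigroup S] [DecidableEq S]

theorem piSet_subset_of_perm {T T' : List S} (h : T.Perm T') : PiSet T ⊆ PiSet T' := by
  rintro s ⟨u, hu, a, l, hperm, hprod⟩
  obtain ⟨u', hpu, hsu⟩ := hu.subperm.trans h.subperm
  exact ⟨u', hsu, a, l, hperm.trans hpu.symm, hprod⟩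

theorem piSet_perm {T T' : List S} (h : T.Perm T') : PiSet T = PiSet T' :=
  Set.Subset.antisymm (piSet_subset_of_perm h) (piSet_subset_of_perm h.symm)

theorem mem_piSet_single {T : List S} {u : S} (hu : u ∈ T) : u ∈ PiSet T :=
  ⟨[u], (List.singleton_sublist).2 hu, u, [], List.Perm.refl _, rfl⟩

theorem mem_piSet_replicate {T : List S} {u : S} {m : ℕ} (hm : 0 < m)
    (hc : m ≤ T.count u) : pow1 u (m - 1) ∈ PiSet T := by
  have hsub : (List.replicate m u).Sublist T := List.replicate_sublist_iff.2 hc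
  obtain ⟨m', rfl⟩ : ∃ m', m = m' + 1 := ⟨m - 1, by omega⟩
  refine ⟨List.replicate (m'+1) u, hsub, u, List.replicate m' u, ?_, ?_⟩
  · rw [List.replicate_succ]
  · rw [sprod_replicate]; norm_num

theorem aSet_mono {L L' : List S} (h : L.Sublist L') : ASet L ⊆ ASet L' := by
  rintro s ⟨a, l, hsub, hprod⟩
  exact ⟨a, l, hsub.trans h, hprod⟩

theorem aSet_subset_piSet (L : List S) : ASet L ⊆ PiSet L := by
  rintro s ⟨a, l, hsub, hprod⟩
  exact ⟨a :: l, hsub, a, l, List.Perm.refl _, hprod⟩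

theorem mem_aSet_of_mem {L : List S} {t : S} (h : t ∈ L) : t ∈ ASet L :=
  ⟨t, [], (List.singleton_sublist).2 h, rfl⟩

theorem mul_mem_aSet {L : List S} {s t : S} (h : s ∈ ASet L) :
    s * t ∈ ASet (L ++ [t]) := by
  obtain ⟨a, l, hsub, hprod⟩ := h
  refine ⟨a, l ++ [t], ?_, by rw [sprod_append, hprod]⟩
  have : a :: (l ++ [t]) = (a :: l) ++ [t] := rfl
  rw [this]
  exact hsub.append (List.Sublist.refl [t])

theorem piSet_subset_nonidem {T : List S}
    (hfree : PiSet T ∩ {e : S | e * e = e} = ∅) : PiSet T ⊆ {x : S | x * x ≠ x} := by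
  intro s hs hidem
  exact Set.eq_empty_iff_forall_notMem.1 hfree s ⟨hs, hidem⟩

theorem aset_take_ssubset (hfin : {x : S | x * x ≠ x}.Finite) {T : List S}
    (hfree : PiSet T ∩ {e : S | e * e = e} = ∅) {T' : List S} (hperm : T'.Perm T)
    {j : ℕ} (hj : j < T'.length) :
    ASet (T'.take j) ⊂ ASet (T'.take (j+1)) := by
  have htake : T'.take (j+1) = T'.take j ++ [T'[j]] := by
    rw [List.take_succ, List.getElem?_eq_getElem hj]
    rfl
  have hsub : ASet (T'.take j) ⊆ ASet (T'.take (j+1)) := by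
    apply aSet_mono
    rw [htake]
    exact List.sublist_append_left _ _
  refine ⟨hsub, fun hsup => ?_⟩
  have heq : ASet (T'.take (j+1)) = ASet (T'.take j) := Set.Subset.antisymm hsup hsub
  set t := T'[j] with ht
  have htA : t ∈ ASet (T'.take j) := by
    rw [← heq]
    exact mem_aSet_of_mem (by rw [htake]; simp)
  have hclos : ∀ s ∈ ASet (T'.take j), s * t ∈ ASet (T'.take j) := by
    intro s hs
    rw [← heq, htake]
    exact mul_mem_aSet hs
  have hpows : ∀ m, pow1 t m ∈ ASet (T'.take j) := by
    intro m
    induction m with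
    | zero => exact htA
    | succ m ih => rw [pow1_succ]; exact hclos _ ih
  have hsubPi : ASet (T'.take j) ⊆ PiSet T := by
    refine (aSet_mono (List.take_sublist _ _)).trans ?_
    rw [← piSet_perm hperm]
    exact aSet_subset_piSet T'
  obtain ⟨m, hm⟩ := exists_idem_pow t (pow1_range_finite hfin t)
  exact piSet_subset_nonidem hfree (hsubPi (hpows m)) hm

theorem key_mul_mem (hfin : {x : S | x * x ≠ x}.Finite) {T : List S}
    (hfree : PiSet T ∩ {e : S | e * e = e} = ∅)
    (hlen : T.length = {x : S | x * x ≠ x}.ncard)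
    {u w : S} (hne : u ≠ w) (hu : u ∈ T) (hw : w ∈ T) :
    w * u = w ∨ w * u = u := by
  classical
  set T' : List S := w :: u :: ((T.erase w).erase u) with hT'
  have hperm : T'.Perm T := by
    have h1 : T.Perm (w :: T.erase w) := List.perm_cons_erase hw
    have hu' : u ∈ T.erase w := (List.mem_erase_of_ne hne).2 hu
    have h2 : (T.erase w).Perm (u :: (T.erase w).erase u) := List.perm_cons_erase hu'
    exact ((h1.trans (h2.cons w)).symm)
  have hlenT' : T'.length = T.length := hperm.length_eq
  have hn2 : 2 ≤ T.length := by
    rw [← hlenT', hT']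
    simp only [List.length_cons]
    omega
  -- chain of strict inclusions
  have hNfin := hfin
  have hchain : ∀ d, 2 + d ≤ T.length →
      (ASet (T'.take 2)).ncard + d ≤ (ASet (T'.take (2 + d))).ncard := by
    intro d
    induction d with
    | zero => intro _; simp
    | succ d ih =>
        intro hd
        have h1 := ih (by omega)
        have hss : ASet (T'.take (2 + d)) ⊂ ASet (T'.take (2 + d + 1)) :=
          aset_take_ssubset hfin hfree hperm (by omega)
        have hfinA : (ASet (T'.take (2 + d + 1))).Finite := by
          apply hfin.subset
          refine Set.Subset.trans ?_ (piSet_subset_nonidem hfree)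
          refine (aSet_mono (List.take_sublist _ _)).trans ?_
          rw [← piSet_perm hperm]
          exact aSet_subset_piSet T'
        have := Set.ncard_lt_ncard hss hfinA
        have : 2 + (d + 1) = (2 + d) + 1 := by omega
        rw [this]
        omega
  have hfull := hchain (T.length - 2) (by omega)
  have htakefull : T'.take (2 + (T.length - 2)) = T' := by
    rw [show 2 + (T.length - 2) = T'.length by omega]
    exact List.take_length
  rw [htakefull] at hfull
  have hTop : (ASet T').ncard ≤ T.length := by
    rw [hlen]
    apply Set.ncard_le_ncard _ hfin
    exact (aSet_subset_piSet T').trans (by rw [piSet_perm hperm]; exact piSet_subset_nonidem hfree)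
  have hA2 : (ASet (T'.take 2)).ncard ≤ 2 := by omega
  -- compute ASet (T'.take 2)
  have htake2 : T'.take 2 = [w, u] := rfl
  have hwmem : w ∈ ASet (T'.take 2) := by rw [htake2]; exact mem_aSet_of_mem (by simp)
  have humem : u ∈ ASet (T'.take 2) := by rw [htake2]; exact mem_aSet_of_mem (by simp)
  have hwumem : w * u ∈ ASet (T'.take 2) := by
    rw [htake2]
    exact ⟨w, [u], List.Sublist.refl _, rfl⟩
  by_contra hcon
  push_neg at hcon
  obtain ⟨h1, h2⟩ := hcon
  have hsub3 : ({w, u, w * u} : Set S) ⊆ ASet (T'.take 2) := by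
    rintro s (rfl | rfl | rfl) <;> assumption
  have hfinA2 : (ASet (T'.take 2)).Finite := by
    apply hfin.subset
    refine Set.Subset.trans ?_ (piSet_subset_nonidem hfree)
    refine (aSet_mono (List.take_sublist _ _)).trans ?_
    rw [← piSet_perm hperm]
    exact aSet_subset_piSet T'
  have h3 : ({w, u, w * u} : Set S).ncard = 3 := by
    rw [Set.ncard_insert_of_notMem (by simp [Ne.symm hne, Ne.symm h1]) (by
      apply Set.Finite.insert; exact Set.finite_singleton _),
      Set.ncard_insert_of_notMem (by simp [Ne.symm h2]) (Set.finite_singleton _),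
      Set.ncard_singleton]
  have := Set.ncard_le_ncard hsub3 hfinA2
  omega

theorem dichotomy (hfin : {x : S | x * x ≠ x}.Finite) {T : List S}
    (hfree : PiSet T ∩ {e : S | e * e = e} = ∅)
    (hlen : T.length = {x : S | x * x ≠ x}.ncard)
    {u w : S} (hne : u ≠ w) (hu : u ∈ T) (hw : w ∈ T) :
    (u * w = w ∧ w * u = w) ∨ (w * u = u ∧ u * w = u) := by
  have hwu := key_mul_mem hfin hfree hlen hne hu hw
  have huw := key_mul_mem hfin hfree hlen (Ne.symm hne) hw hu
  have hunid : u * u ≠ u := piSet_subset_nonidem hfree (mem_piSet_single hu)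
  have hwnid : w * w ≠ w := piSet_subset_nonidem hfree (mem_piSet_single hw)
  rcases huw with h1 | h1 <;> rcases hwu with h2 | h2
  -- h1 : u*w = u or = w ; h2 : w*u = w or = u
  · -- u*w = u, w*u = w : w*u*w both ways
    exfalso
    apply hwnid
    have : w * (u * w) = (w * u) * w := (mul_assoc w u w).symm
    rw [h1, h2] at this
    exact this.symm
  · exact Or.inr ⟨h2, h1⟩
  · exact Or.inl ⟨h1, h2⟩
  · -- u*w = w, w*u = u
    exfalso
    apply hunid
    have : (u * w) * u = u * (w * u) := mul_assoc u w u
    rw [h1, h2] at this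
    exact this.symm
end PiSetLemmas

section SortSec
variable {α : Type*} [DecidableEq α]

theorem exists_rel_min (G : Finset α) (r : α → α → Prop)
    (htot : ∀ a ∈ G, ∀ b ∈ G, a ≠ b → r a b ∨ r b a)
    (htrans : ∀ a ∈ G, ∀ b ∈ G, ∀ c ∈ G, r a b → r b c → r a c)
    (F : Finset α) :
    F ⊆ G → F.Nonempty → ∃ m ∈ F, ∀ a ∈ F, a ≠ m → r m a := by
  classical
  induction F using Finset.induction_on with
  | empty => intro _ h; exact absurd h (by simp)
  | @insert t F htF ih =>
      intro hFG _
      rcases F.eq_empty_or_nonempty with rfl | hne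
      · refine ⟨t, by simp, ?_⟩
        intro a ha hat
        simp at ha
        exact absurd ha hat
      · obtain ⟨m', hm'F, hmin⟩ := ih ((Finset.subset_insert t F).trans hFG) hne
        have htG : t ∈ G := hFG (Finset.mem_insert_self t F)
        have hm'G : m' ∈ G := hFG (Finset.mem_insert_of_mem hm'F)
        have htm' : t ≠ m' := fun h => htF (h ▸ hm'F)
        rcases htot t htG m' hm'G htm' with h | h
        · refine ⟨t, Finset.mem_insert_self t F, ?_⟩
          intro a ha hat
          rcases Finset.mem_insert.1 ha with rfl | haF
          · exact absurd rfl hat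
          · by_cases ham : a = m'
            · subst ham; exact h
            · exact htrans t htG m' hm'G a (hFG ha) h (hmin a haF ham)
        · refine ⟨m', Finset.mem_insert_of_mem hm'F, ?_⟩
          intro a ha ham
          rcases Finset.mem_insert.1 ha with rfl | haF
          · exact h
          · exact hmin a haF ham

theorem exists_sorted_list (G : Finset α) (r : α → α → Prop)
    (htot : ∀ a ∈ G, ∀ b ∈ G, a ≠ b → r a b ∨ r b a)
    (htrans : ∀ a ∈ G, ∀ b ∈ G, ∀ c ∈ G, r a b → r b c → r a c)
    (F : Finset α) :
    F ⊆ G → ∃ l : List α, l.Nodup ∧ l.toFinset = F ∧ l.Pairwise r := by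
  classical
  induction F using Finset.strongInduction with
  | _ F ih =>
    intro hFG
    rcases F.eq_empty_or_nonempty with rfl | hne
    · exact ⟨[], by simp, by simp, by simp⟩
    · obtain ⟨m, hmF, hmin⟩ := exists_rel_min G r htot htrans F hFG hne
      obtain ⟨l, hl1, hl2, hl3⟩ := ih (F.erase m) (Finset.erase_ssubset hmF)
        ((F.erase_subset m).trans hFG)
      have hml : m ∉ l := by
        intro hm
        have : m ∈ F.erase m := hl2 ▸ List.mem_toFinset.2 hm
        simp at this
      have hrml : ∀ b ∈ l, r m b := by
        intro b hb
        have hbF : b ∈ F.erase m := hl2 ▸ List.mem_toFinset.2 hb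
        exact hmin b (Finset.mem_of_mem_erase hbF) (Finset.ne_of_mem_erase hbF)
      refine ⟨m :: l, ?_, ?_, ?_⟩
      · exact List.nodup_cons.2 ⟨hml, hl1⟩
      · rw [List.toFinset_cons, hl2, Finset.insert_erase hmF]
      · exact List.pairwise_cons.2 ⟨hrml, hl3⟩

end SortSec

noncomputable def AFin {S : Type*} [Semigroup S] [DecidableEq S] (u : S) (r p : ℕ) : Finset S :=
  ((Finset.Icc 1 (r + p - 1)).filter (fun m => ¬(r ≤ m ∧ p ∣ m))).image (fun m => pow1 u (m-1))

section CountSec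
variable {S : Type*} [Semigroup S] [DecidableEq S] {u : S} {r p : ℕ}

theorem AFin_nonidem (h : HasIndexPeriod u r p) :
    ∀ z ∈ AFin u r p, z * z ≠ z := by
  intro z hz hidem
  obtain ⟨m, hm, rfl⟩ := Finset.mem_image.1 hz
  obtain ⟨hmI, hmQ⟩ := Finset.mem_filter.1 hm
  rw [Finset.mem_Icc] at hmI
  have := (hip_idem_iff h (m-1)).1 hidem
  refine hmQ ⟨by omega, ?_⟩
  have h2 := this.2
  rwa [show m - 1 + 1 = m by omega] at h2

theorem card_AFin (h : HasIndexPeriod u r p) : (AFin u r p).card = r + p - 2 := by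
  have hr := h.1.1; have hp := h.2.1
  have hinj : Set.InjOn (fun m => pow1 u (m-1))
      ↑((Finset.Icc 1 (r + p - 1)).filter (fun m => ¬(r ≤ m ∧ p ∣ m))) := by
    intro m hm m' hm' heq
    simp only [Finset.coe_filter, Set.mem_setOf_eq, Finset.mem_Icc] at hm hm'
    by_contra hne
    have key : ∀ a b : ℕ, 1 ≤ a → a < b → b ≤ r + p - 1 →
        pow1 u (a-1) = pow1 u (b-1) → False := by
      intro a b h1 h2 h3 he
      have := hip_le h (a := a-1) (b := b-1) (by omega) he
      have hdvd : p ∣ (b - 1) - (a - 1) := this.2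
      have hle := this.1
      have hpos : 0 < (b-1) - (a-1) := by omega
      have := Nat.le_of_dvd hpos hdvd
      omega
    rcases Nat.lt_or_ge m m' with hlt | hge
    · exact key m m' (by omega) hlt (by omega) heq
    · exact key m' m (by omega) (by omega) (by omega) heq.symm
  rw [AFin, Finset.card_image_of_injOn hinj]
  have hsplit := Finset.card_filter_add_card_filter_not
    (s := Finset.Icc 1 (r + p - 1)) (p := fun m => (r ≤ m ∧ p ∣ m))
  have hIcc : (Finset.Icc 1 (r + p - 1)).card = r + p - 1 := by
    rw [Nat.card_Icc]; omega
  -- the positive filter has exactly one element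
  have hone : ((Finset.Icc 1 (r + p - 1)).filter (fun m => (r ≤ m ∧ p ∣ m))).card = 1 := by
    obtain ⟨q, s, hqs, hslt⟩ : ∃ q s, p * q + s = r - 1 ∧ s < p :=
      ⟨(r-1)/p, (r-1)%p, Nat.div_add_mod _ _, Nat.mod_lt _ hp⟩
    have hfe : (Finset.Icc 1 (r + p - 1)).filter (fun m => (r ≤ m ∧ p ∣ m)) = {p * (q+1)} := by
      ext m
      simp only [Finset.mem_filter, Finset.mem_Icc, Finset.mem_singleton]
      constructor
      · rintro ⟨⟨h1, h2⟩, h3, j, hj⟩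
        have hjq : q < j := by
          rcases Nat.lt_or_ge q j with hh | hh
          · exact hh
          · exfalso
            have : p * j ≤ p * q := Nat.mul_le_mul_left p hh
            omega
        have hjq2 : j < q + 2 := by
          rcases Nat.lt_or_ge j (q+2) with hh | hh
          · exact hh
          · exfalso
            have : p * (q+2) ≤ p * j := Nat.mul_le_mul_left p hh
            have hexp : p * (q+2) = p * q + p + p := by ring
            omega
        have : j = q + 1 := by omega
        rw [hj, this]
      · rintro rfl
        have hexp : p * (q+1) = p * q + p := by ring
        refine ⟨⟨by omega, by omega⟩, by omega, q+1, rfl⟩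
    rw [hfe, Finset.card_singleton]
  omega

theorem nonidem_range_subset_AFin (h : HasIndexPeriod u r p) :
    ∀ z ∈ Set.range (pow1 u), z * z ≠ z → z ∈ AFin u r p := by
  rintro _ ⟨m, rfl⟩ hni
  obtain ⟨m', hm', he⟩ := hip_reduce h m
  rw [he] at hni ⊢
  apply Finset.mem_image.2
  refine ⟨m' + 1, Finset.mem_filter.2 ⟨Finset.mem_Icc.2 ⟨by omega, by
      have := h.1.1; have := h.2.1; omega⟩, ?_⟩, by simp⟩
  intro ⟨h1, h2⟩
  exact hni ((hip_idem_iff h m').2 ⟨by omega, h2⟩)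

theorem absorb_pow {u w : S} (huw : u * w = w) : ∀ m, u * pow1 w m = pow1 w m := by
  intro m
  induction m with
  | zero => exact huw
  | succ m ih => rw [pow1_succ, ← mul_assoc, ih]

theorem absorb_pow_right {u w : S} (hu : u * w = u) : ∀ m, u * pow1 w m = u := by
  intro m
  induction m with
  | zero => exact hu
  | succ m ih => rw [pow1_succ, ← mul_assoc, ih, hu]

/-- If `w` absorbs `u` (i.e. `u*w = w`), the non-idempotent power sets are disjoint. -/
theorem AFin_disjoint {u w : S} {r p r' p' : ℕ} (hu : HasIndexPeriod u r p)
    (hw : HasIndexPeriod w r' p') (habs : u * w = w) :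
    Disjoint (AFin u r p) (AFin w r' p') := by
  rw [Finset.disjoint_left]
  intro z hzu hzw
  obtain ⟨m, hm, hze⟩ := Finset.mem_image.1 hzu
  obtain ⟨hmI, hmQ⟩ := Finset.mem_filter.1 hm
  rw [Finset.mem_Icc] at hmI
  obtain ⟨j, hj, hze'⟩ := Finset.mem_image.1 hzw
  -- u * z = z since z is a power of w
  have huz : u * z = z := by rw [← hze']; exact absorb_pow habs _
  -- hence pow1 u (m-1) = pow1 u m
  have hpow : pow1 u (m - 1) = pow1 u ((m-1) + 1) := by
    rw [pow1_succ', hze]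
    exact huz.symm
  have hle := hip_le hu (a := m - 1) (b := (m-1)+1) (by omega) hpow
  have hd := hle.2
  rw [show (m-1)+1 - (m-1) = 1 by omega] at hd
  have hp1 : p = 1 := Nat.dvd_one.1 hd
  have hidem : z * z = z := by
    rw [← hze]
    exact (hip_idem_iff hu (m-1)).2 ⟨hle.1, by simp [hp1]⟩
  exact AFin_nonidem hu z hzu hidem

end CountSec

section Count2
variable {S : Type*} [Semigroup S] [DecidableEq S]

theorem count_le_of_free {T : List S} (hfree : PiSet T ∩ {e : S | e * e = e} = ∅)
    {u : S} {r p : ℕ} (h : HasIndexPeriod u r p) :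
    T.count u ≤ r + p - 2 ∧ (T.count u = r + p - 2 → r ≡ 1 [MOD p]) := by
  have hr := h.1.1; have hp := h.2.1
  obtain ⟨q, s, hqs, hslt⟩ : ∃ q s, p * q + s = r - 1 ∧ s < p :=
    ⟨(r-1)/p, (r-1)%p, Nat.div_add_mod _ _, Nat.mod_lt _ hp⟩
  set c := p * q + p with hc
  have hcdvd : p ∣ c := ⟨q+1, by ring⟩
  have hcr : r ≤ c := by omega
  have hcb : c ≤ r + p - 1 := by omega
  have hcount : T.count u ≤ c - 1 := by
    by_contra hcon
    push_neg at hcon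
    have hmem : pow1 u (c - 1) ∈ PiSet T := mem_piSet_replicate (by omega) (by omega)
    have hidem : pow1 u (c-1) * pow1 u (c-1) = pow1 u (c-1) :=
      (hip_idem_iff h (c-1)).2 ⟨by omega, by rwa [show c - 1 + 1 = c by omega]⟩
    exact Set.eq_empty_iff_forall_notMem.1 hfree _ ⟨hmem, hidem⟩
  refine ⟨by omega, fun hceq => ?_⟩
  have hceq2 : c = r + p - 1 := by omega
  exact (Nat.ModEq.symm ((Nat.modEq_iff_dvd' (by omega : 1 ≤ r)).2 ⟨q, by omega⟩))

theorem word_prod {k : ℕ} (x : Fin k → S) (hinj : Function.Injective x)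
    (hcomm : ∀ i j, i < j → x i * x j = x j ∧ x j * x i = x j) :
    ∀ (l : List S) (a : S), (∀ y ∈ a :: l, ∃ i, y = x i) →
      ∃ i : Fin k, sprod a l = pow1 (x i) ((a::l).count (x i) - 1) ∧
        0 < (a::l).count (x i) ∧ ∀ j, x j ∈ a :: l → j ≤ i := by
  intro l
  induction l with
  | nil =>
      intro a ha
      obtain ⟨i, rfl⟩ := ha a (by simp)
      refine ⟨i, ?_, ?_, ?_⟩
      · simp [sprod, List.count_cons]; rfl
      · simp [List.count_cons]
      · intro j hj
        simp at hj
        exact le_of_eq (hinj hj)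
  | cons b l ih =>
      intro a ha
      obtain ⟨i', hprod, hcpos, hmax⟩ := ih b (fun y hy => ha y (List.mem_cons_of_mem a hy))
      obtain ⟨i0, ha0⟩ := ha a (by simp)
      rw [sprod_cons]
      rcases lt_trichotomy i0 i' with hlt | heq | hgt
      · refine ⟨i', ?_, ?_, ?_⟩
        · have hne : a ≠ x i' := by rw [ha0]; exact fun h => (ne_of_lt hlt) (hinj h)
          rw [List.count_cons_of_ne hne]
          rw [hprod, ha0, absorb_pow (hcomm i0 i' hlt).1]
        · have hne : a ≠ x i' := by rw [ha0]; exact fun h => (ne_of_lt hlt) (hinj h)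
          rw [List.count_cons_of_ne hne]
          exact hcpos
        · intro j hj
          rcases List.mem_cons.1 hj with hj1 | hj2
          · have : j = i0 := hinj (hj1.trans ha0)
            omega
          · exact hmax j hj2
      · subst heq
        refine ⟨i0, ?_, ?_, ?_⟩
        · rw [ha0, hprod, ← pow1_succ', List.count_cons_self]
          congr 1
          omega
        · rw [ha0, List.count_cons_self]
          omega
        · intro j hj
          rcases List.mem_cons.1 hj with hj1 | hj2
          · exact le_of_eq (hinj (hj1.trans ha0))
          · exact hmax j hj2
      · refine ⟨i0, ?_, ?_, ?_⟩
        · have hnotmem : x i0 ∉ b :: l := fun hmem => absurd (hmax i0 hmem) (not_le.2 hgt)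
          have hcz : (b :: l).count (x i0) = 0 := List.count_eq_zero.2 hnotmem
          have : (a :: b :: l).count (x i0) = 1 := by
            rw [ha0, List.count_cons_self, hcz]
          rw [this, hprod, ha0, absorb_pow_right (hcomm i' i0 hgt).2]
          rfl
        · have hcz : (b :: l).count (x i0) = 0 :=
            List.count_eq_zero.2 (fun hmem => absurd (hmax i0 hmem) (not_le.2 hgt))
          rw [ha0, List.count_cons_self, hcz]
          omega
        · intro j hj
          rcases List.mem_cons.1 hj with hj1 | hj2
          · exact le_of_eq (hinj (hj1.trans ha0))
          · exact le_of_lt (lt_of_le_of_lt (hmax j hj2) hgt)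
end Count2

/-- Main theorem (equivalent form): a sequence `T` of length `|S \ E(S)|` is
idempotent-product free iff `supp(T) = {x_1, …, x_k}` with distinct `x_i` such that
each `⟨x_i⟩` is finite with `I(x_i) ≡ 1 (mod P(x_i))` and
`v_{x_i}(T) = I(x_i) + P(x_i) - 2`, `x_i * x_j = x_j * x_i = x_j` for `i < j`,
the non-idempotent parts of the `⟨x_i⟩` are pairwise disjoint, and every element
outside `⋃ ⟨x_i⟩` is an idempotent. -/
theorem stmt_14 {S : Type*} [Semigroup S] [Nonempty S] [DecidableEq S]
    (hfin : {x : S | x * x ≠ x}.Finite)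
    (T : List S) (hlen : T.length = {x : S | x * x ≠ x}.ncard) :
    PiSet T ∩ {e : S | e * e = e} = ∅ ↔
      ∃ (k : ℕ) (x : Fin k → S), Function.Injective x ∧
        (∀ s : S, s ∈ T ↔ ∃ i, s = x i) ∧
        (∀ i, (Set.range (pow1 (x i))).Finite ∧
          ∃ r p : ℕ, HasIndexPeriod (x i) r p ∧ r ≡ 1 [MOD p] ∧
            T.count (x i) = r + p - 2) ∧
        (∀ i j, i < j → x i * x j = x j ∧ x j * x i = x j) ∧
        (∀ i j, i ≠ j →
          {y ∈ Set.range (pow1 (x i)) | y * y ≠ y}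
            ∩ {y ∈ Set.range (pow1 (x j)) | y * y ≠ y} = ∅) ∧
        (∀ s : S, s ∉ ⋃ i, Set.range (pow1 (x i)) → s * s = s) := by
  constructor
  · intro hfree
    classical
    have hrange : ∀ x : S, (Set.range (pow1 x)).Finite := pow1_range_finite hfin
    choose rI pI hip using fun x : S => exists_hip x (hrange x)
    set rel : S → S → Prop := fun a b => a * b = b ∧ b * a = b with hrel
    have htot : ∀ a ∈ T.toFinset, ∀ b ∈ T.toFinset, a ≠ b → rel a b ∨ rel b a := by
      intro a ha b hb hab
      rcases dichotomy hfin hfree hlen hab (List.mem_toFinset.1 ha)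
        (List.mem_toFinset.1 hb) with ⟨h1, h2⟩ | ⟨h1, h2⟩
      · exact Or.inl ⟨h1, h2⟩
      · exact Or.inr ⟨h1, h2⟩
    have htrans : ∀ a ∈ T.toFinset, ∀ b ∈ T.toFinset, ∀ c ∈ T.toFinset,
        rel a b → rel b c → rel a c := by
      rintro a _ b _ c _ ⟨hab1, hab2⟩ ⟨hbc1, hbc2⟩
      constructor
      · conv_lhs => rw [← hbc1]
        rw [← mul_assoc, hab1, hbc1]
      · conv_lhs => rw [← hbc2]
        rw [mul_assoc, hab2, hbc2]
    obtain ⟨l, hnd, hlF, hpair⟩ := exists_sorted_list T.toFinset rel htot htrans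
      T.toFinset (Finset.Subset.refl _)
    have hmemTl : ∀ s : S, s ∈ T ↔ s ∈ l := fun s => by
      rw [← List.mem_toFinset, ← hlF, List.mem_toFinset]
    set Af : S → Finset S := fun u2 => AFin u2 (rI u2) (pI u2) with hAf
    have hAfsub : ∀ u2, (Af u2 : Finset S) ⊆ hfin.toFinset := by
      intro u2 z hz
      rw [Set.Finite.mem_toFinset]
      exact AFin_nonidem (hip u2) z hz
    have hdisj : ∀ u2 ∈ T.toFinset, ∀ w ∈ T.toFinset, u2 ≠ w → Disjoint (Af u2) (Af w) := by
      intro u2 hu2 w hw hne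
      rcases htot u2 hu2 w hw hne with ⟨h1, _⟩ | ⟨h1, _⟩
      · exact AFin_disjoint (hip u2) (hip w) h1
      · exact (AFin_disjoint (hip w) (hip u2) h1).symm
    have hsum1 : ∑ u2 ∈ T.toFinset, T.count u2 = T.length := by
      have h0 := Multiset.toFinset_sum_count_eq (T : Multiset S)
      simpa using h0
    have hcntle : ∀ u2 ∈ T.toFinset, T.count u2 ≤ (Af u2).card := by
      intro u2 _
      rw [hAf]
      rw [card_AFin (hip u2)]
      exact (count_le_of_free hfree (hip u2)).1
    have hbi : (T.toFinset.biUnion Af).card = ∑ u2 ∈ T.toFinset, (Af u2).card :=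
      Finset.card_biUnion hdisj
    have hbisub : T.toFinset.biUnion Af ⊆ hfin.toFinset := by
      intro z hz
      obtain ⟨u2, _, hzu⟩ := Finset.mem_biUnion.1 hz
      exact hAfsub u2 hzu
    have hNcard : hfin.toFinset.card = T.length := by
      rw [hlen, Set.ncard_eq_toFinset_card _ hfin]
    have hle1 : ∑ u2 ∈ T.toFinset, (Af u2).card ≤ T.length := by
      rw [← hbi]
      calc (T.toFinset.biUnion Af).card ≤ hfin.toFinset.card := Finset.card_le_card hbisub
      _ = T.length := hNcard
    have hsums := Finset.sum_le_sum hcntle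
    have hcnteq : ∀ u2 ∈ T.toFinset, T.count u2 = (Af u2).card := by
      intro u2 hu2
      by_contra hne
      have hlt : T.count u2 < (Af u2).card := lt_of_le_of_ne (hcntle u2 hu2) hne
      have := Finset.sum_lt_sum hcntle ⟨u2, hu2, hlt⟩
      omega
    have hcnt : ∀ u2 ∈ T.toFinset, T.count u2 = rI u2 + pI u2 - 2 := by
      intro u2 hu2; rw [hcnteq u2 hu2, hAf, card_AFin (hip u2)]
    have hbiall : T.toFinset.biUnion Af = hfin.toFinset := by
      apply Finset.eq_of_subset_of_card_le hbisub
      rw [hNcard, hbi]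
      have : ∑ u2 ∈ T.toFinset, T.count u2 = ∑ u2 ∈ T.toFinset, (Af u2).card :=
        Finset.sum_congr rfl hcnteq
      omega
    have hinjget : Function.Injective l.get := List.nodup_iff_injective_get.1 hnd
    refine ⟨l.length, l.get, hinjget, ?_, ?_, ?_, ?_, ?_⟩
    · intro s
      rw [hmemTl s, List.mem_iff_get]
      exact ⟨fun ⟨n, h⟩ => ⟨n, h.symm⟩, fun ⟨n, h⟩ => ⟨n, h.symm⟩⟩
    · intro i
      have hmem : l.get i ∈ T.toFinset := by
        rw [← hlF]
        exact List.mem_toFinset.2 (List.mem_iff_get.2 ⟨i, rfl⟩)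
      exact ⟨hrange _, rI _, pI _, hip _,
        (count_le_of_free hfree (hip _)).2 (hcnt _ hmem), hcnt _ hmem⟩
    · intro i j hij
      exact List.pairwise_iff_get.1 hpair i j hij
    · intro i j hij
      apply Set.eq_empty_iff_forall_notMem.2
      rintro z ⟨⟨hz1, hz2⟩, ⟨hz3, hz4⟩⟩
      have hzi : z ∈ Af (l.get i) := nonidem_range_subset_AFin (hip _) z hz1 hz2
      have hzj : z ∈ Af (l.get j) := nonidem_range_subset_AFin (hip _) z hz3 hz4
      have hne : l.get i ≠ l.get j := fun h => hij (hinjget h)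
      have hmi : l.get i ∈ T.toFinset := by
        rw [← hlF]; exact List.mem_toFinset.2 (List.mem_iff_get.2 ⟨i, rfl⟩)
      have hmj : l.get j ∈ T.toFinset := by
        rw [← hlF]; exact List.mem_toFinset.2 (List.mem_iff_get.2 ⟨j, rfl⟩)
      exact Finset.disjoint_left.1 (hdisj _ hmi _ hmj hne) hzi hzj
    · intro s hs
      by_contra hss
      have hsN : s ∈ hfin.toFinset := (Set.Finite.mem_toFinset hfin).2 hss
      rw [← hbiall] at hsN
      obtain ⟨u2, hu2, hsu⟩ := Finset.mem_biUnion.1 hsN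
      rw [← hlF] at hu2
      obtain ⟨i, hi⟩ := List.mem_iff_get.1 (List.mem_toFinset.1 hu2)
      apply hs
      refine Set.mem_iUnion.2 ⟨i, ?_⟩
      obtain ⟨m, _, rfl⟩ := Finset.mem_image.1 hsu
      exact ⟨m - 1, by rw [hi]⟩
  · rintro ⟨k, x, hinj, hsupp, hiii, hcomm, -, -⟩
    apply Set.eq_empty_iff_forall_notMem.2
    rintro s ⟨⟨u, husub, a, l0, hperm, hprod⟩, hidem⟩
    have hidem' : s * s = s := hidem
    have hmemx : ∀ y ∈ a :: l0, ∃ i, y = x i := fun y hy =>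
      (hsupp y).1 (husub.subset (hperm.subset hy))
    obtain ⟨i, hpe, hpos, -⟩ := word_prod x hinj hcomm l0 a hmemx
    obtain ⟨hfinr, r, p, hipi, hmod, hcount⟩ := hiii i
    have hcle : (a :: l0).count (x i) ≤ T.count (x i) := by
      rw [hperm.count_eq]
      exact husub.count_le _
    set c := (a :: l0).count (x i) with hc
    have hse : pow1 (x i) (c - 1) = s := hpe.symm.trans hprod
    have hidem2 : pow1 (x i) (c-1) * pow1 (x i) (c-1) = pow1 (x i) (c-1) := by
      rw [hse]; exact hidem'
    have hchar := (hip_idem_iff hipi (c-1)).1 hidem2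
    have hr := hipi.1.1
    have hp := hipi.2.1
    have hdvd : p ∣ c := by
      have h2 := hchar.2
      rwa [show c - 1 + 1 = c by omega] at h2
    have hcr : r ≤ c := by have := hchar.1; omega
    have hcub : c ≤ r + p - 2 := le_trans hcle (le_of_eq hcount)
    have hdr : p ∣ r - 1 := (Nat.modEq_iff_dvd' (by omega : 1 ≤ r)).1 hmod.symm
    have hdvd2 : p ∣ c - (r - 1) := Nat.dvd_sub hdvd hdr
    have hpos2 : 0 < c - (r - 1) := by omega
    have := Nat.le_of_dvd hpos2 hdvd2
    omega
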